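/- Let N ≥ m > 2, m' = m/(m−1), r₀ > 0, and let f : ℝ → ℝ be locally Lipschitz in a neighborhood of u₀ with f(u₀) ≠ 0. Suppose (u₁, v₁) and (u₂, v₂) are two C¹ solutions on [r₀, r₀+η] (η > 0) of the system u' = |v|^(m'−2)·v, v' = −((N−1)/r)·v − f(u), with u₁(r₀) = u₂(r₀) = u₀ and v₁(r₀) = v₂(r₀) = 0. Then there exists δ ∈ (0, η] such that (u₁, v₁) = (u₂, v₂) on [r₀, r₀+δ]. -/

import Mathlib

open Set Filter MeasureTheory

noncomputable def phim (m x : ℝ) : ℝ := |x| ^ (m - 2) * x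

noncomputable def Fint (f : ℝ → ℝ) (s : ℝ) : ℝ := ∫ t in (0:ℝ)..s, f t

noncomputable def Qfun (N m : ℝ) (f : ℝ → ℝ) (s : ℝ) : ℝ :=
  m * N * Fint f s - (N - m) * s * f s

/-- `u` (with derivative function `u'`) is a solution of the radial quasilinear
equation on the set `J`. -/
def IsSolutionOn (N m : ℝ) (f : ℝ → ℝ) (J : Set ℝ) (u u' : ℝ → ℝ) : Prop :=
  (∀ r ∈ J, HasDerivWithinAt u (u' r) J r) ∧ ContinuousOn u' J ∧
    ∃ w' : ℝ → ℝ,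
      (∀ r ∈ J ∩ Set.Ioi (0:ℝ),
        HasDerivWithinAt (fun t => phim m (u' t)) (w' r) (J ∩ Set.Ioi (0:ℝ)) r) ∧
      ContinuousOn w' (J ∩ Set.Ioi (0:ℝ)) ∧
      ∀ r ∈ J ∩ Set.Ioi (0:ℝ), w' r + ((N - 1) / r) * phim m (u' r) + f (u r) = 0

def IsIVPSolutionOn (N m : ℝ) (f : ℝ → ℝ) (α : ℝ) (J : Set ℝ) (u u' : ℝ → ℝ) : Prop :=
  IsSolutionOn N m f J u u' ∧ u 0 = α ∧ u' 0 = 0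

/-- Admissible domains for the IVP: `[0,∞)` or `[0,R)` with `0 < R`. -/
def IVPDomain (J : Set ℝ) : Prop :=
  J = Set.Ici (0:ℝ) ∨ ∃ R : ℝ, 0 < R ∧ J = Set.Ico (0:ℝ) R

/-- The solution `u` of the IVP on `J` cannot be extended to a solution on a
strictly larger admissible domain. -/
def Noncontinuable (N m : ℝ) (f : ℝ → ℝ) (α : ℝ) (J : Set ℝ) (u u' : ℝ → ℝ) : Prop :=
  ∀ J' : Set ℝ, IVPDomain J' → J ⊂ J' →
    ¬ ∃ v v' : ℝ → ℝ, IsIVPSolutionOn N m f α J' v v' ∧ Set.EqOn v u J ∧ Set.EqOn v' u' J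

open Classical in
/-- The filter describing the approach to the right endpoint of an IVP domain. -/
noncomputable def domEnd (J : Set ℝ) : Filter ℝ :=
  if J = Set.Ici (0:ℝ) then Filter.atTop else nhdsWithin (sSup J) (Set.Iio (sSup J))

def LocLipschitzOn (f : ℝ → ℝ) (S : Set ℝ) : Prop :=
  ∀ x ∈ S, ∃ ε : ℝ, 0 < ε ∧ ∃ K : NNReal, LipschitzOnWith K f (Metric.ball x ε ∩ S)

/-- Assumption (f₂). -/
structure Hf2 (f : ℝ → ℝ) (βm βp : ℝ) (γm γp : EReal) : Prop where
  hβm : βm < 0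
  hβp : 0 < βp
  hFneg : ∀ s : ℝ, s ∈ Set.Ioo βm βp → s ≠ 0 → Fint f s < 0
  hFβm : Fint f βm = 0
  hFβp : Fint f βp = 0
  hγp : (βp : EReal) < γp
  hγm : γm < (βm : EReal)
  hfpos : ∀ s : ℝ, βp < s → (s : EReal) < γp → 0 < f s
  hfneg : ∀ s : ℝ, γm < (s : EReal) → s < βm → f s < 0
  hγpzero : ∀ s : ℝ, (s : EReal) = γp → f s = 0
  hγmzero : ∀ s : ℝ, (s : EReal) = γm → f s = 0
  hlim : ∃ L : EReal,
    Filter.Tendsto (fun s : ℝ => (Fint f s : EReal))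
      (Filter.comap Real.toEReal (nhdsWithin γp (Set.Iio γp))) (nhds L) ∧
    Filter.Tendsto (fun s : ℝ => (Fint f s : EReal))
      (Filter.comap Real.toEReal (nhdsWithin γm (Set.Ioi γm))) (nhds L)
  hlip : LocLipschitzOn f {s : ℝ | (γm < (s : EReal) ∧ s < 0) ∨ (0 < s ∧ (s : EReal) < γp)}

/-- Assumption (f₃). -/
def Hf3 (N m : ℝ) (f : ℝ → ℝ) (βm βp : ℝ) (γm γp : EReal) : Prop :=
  (γp = ⊤ →
    (∃ βb : ℝ, βp < βb ∧ ∀ s : ℝ, βb ≤ s → 0 ≤ Qfun N m f s) ∧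
    (∃ θ : ℝ, θ ∈ Set.Ioo (0:ℝ) 1 ∧
      Filter.Tendsto (fun s : ℝ =>
        sInf ((fun p : ℝ × ℝ =>
          Qfun N m f p.2 * ((|s| ^ (m - 2) * s) / f p.1) ^ (N / m)) ''
            (Set.Icc (θ * s) s ×ˢ Set.Icc (θ * s) s)))
        Filter.atTop Filter.atTop)) ∧
  (γm = ⊥ →
    (∃ βb : ℝ, -βb < βm ∧ ∀ s : ℝ, s ≤ -βb → 0 ≤ Qfun N m f s) ∧
    (∃ θ : ℝ, θ ∈ Set.Ioo (0:ℝ) 1 ∧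
      Filter.Tendsto (fun s : ℝ =>
        sInf ((fun p : ℝ × ℝ =>
          Qfun N m f p.2 * ((|s| ^ (m - 2) * s) / f p.1) ^ (N / m)) ''
            (Set.Icc s (θ * s) ×ˢ Set.Icc s (θ * s))))
        Filter.atBot Filter.atTop))

/-- Assumption (f₄). -/
def Hf4 (N m : ℝ) (f : ℝ → ℝ) (βm βp : ℝ) (γm γp : EReal) : Prop :=
  (γp ≠ ⊤ → ∃ L₀ : ℝ, 0 < L₀ ∧ ∃ βb : ℝ, βp < βb ∧
    ∀ s : ℝ, βb ≤ s → (s : EReal) < γp → f s ≤ L₀ * (γp.toReal - s) ^ (m - 1)) ∧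
  (γm ≠ ⊥ → ∃ L₀ : ℝ, 0 < L₀ ∧ ∃ βb : ℝ, -βm < βb ∧
    ∀ s : ℝ, γm < (s : EReal) → s ≤ -βb → -f s ≤ L₀ * (s - γm.toReal) ^ (m - 1))

lemma phi_deriv {p x : ℝ} (hx : x ≠ 0) :
    HasDerivAt (fun v : ℝ => |v| ^ (p-2) * v) ((p-1) * |x| ^ (p-2)) x := by
  rcases hx.lt_or_gt with hx | hx
  · -- x < 0
    have h1 : HasDerivAt (fun v : ℝ => -v) (-1) x := (hasDerivAt_id x).neg
    have h2 : HasDerivAt (fun y : ℝ => y ^ (p-1)) ((p-1) * (-x) ^ (p-1-1)) (-x) :=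
      Real.hasDerivAt_rpow_const (Or.inl (by linarith))
    have h3 : HasDerivAt (fun v : ℝ => ((-v) ^ (p-1) : ℝ))
        ((p-1) * (-x) ^ (p-1-1) * (-1)) x := h2.comp x h1
    have h4 := h3.neg
    have heq : (fun v : ℝ => -((-v) ^ (p-1))) =ᶠ[nhds x] fun v : ℝ => |v| ^ (p-2) * v := by
      filter_upwards [Iio_mem_nhds hx] with v hv
      have hv' : (0:ℝ) < -v := by simpa using hv
      rw [abs_of_neg hv]
      rw [show p - 1 = (p-2) + 1 by ring, Real.rpow_add_one (by linarith)]
      ring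
    have h5 := h4.congr_of_eventuallyEq heq.symm
    refine h5.congr_deriv ?_
    rw [abs_of_neg hx]
    ring_nf
  · -- 0 < x
    have h2 : HasDerivAt (fun y : ℝ => y ^ (p-1)) ((p-1) * x ^ (p-1-1)) x :=
      Real.hasDerivAt_rpow_const (Or.inl (by linarith))
    have heq : (fun y : ℝ => (y ^ (p-1) : ℝ)) =ᶠ[nhds x] fun v : ℝ => |v| ^ (p-2) * v := by
      filter_upwards [Ioi_mem_nhds hx] with v hv
      have hv' : (0:ℝ) < v := hv
      rw [abs_of_pos hv', show p - 1 = (p-2) + 1 by ring, Real.rpow_add_one (by linarith)]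
    have h5 := h2.congr_of_eventuallyEq heq.symm
    refine h5.congr_deriv ?_
    rw [abs_of_pos hx, show p - 1 - 1 = p - 2 by ring]

lemma phi_lip {p ρ : ℝ} (hp1 : 1 < p) (hp2 : p < 2) (hρ : 0 < ρ) {a b : ℝ}
    (hab : ∀ x ∈ Set.uIcc a b, ρ ≤ |x|) :
    |(|a| ^ (p-2) * a) - (|b| ^ (p-2) * b)| ≤ ρ ^ (p-2) * |a - b| := by
  have key := Convex.norm_image_sub_le_of_norm_hasDerivWithin_le
    (f := fun v : ℝ => |v| ^ (p-2) * v) (f' := fun v : ℝ => (p-1) * |v| ^ (p-2))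
    (s := Set.uIcc a b) (C := ρ ^ (p-2)) ?_ ?_ (convex_uIcc a b)
    (Set.right_mem_uIcc) (Set.left_mem_uIcc)
  · simpa [Real.norm_eq_abs] using key
  · intro x hx
    have hx0 : x ≠ 0 := by
      intro h; have := hab x hx; rw [h] at this; simp at this; linarith
    exact (phi_deriv hx0).hasDerivWithinAt
  · intro x hx
    have hxρ : ρ ≤ |x| := hab x hx
    have hx2 : |x| ^ (p-2) ≤ ρ ^ (p-2) :=
      Real.rpow_le_rpow_of_nonpos hρ hxρ (by linarith)
    have h0 : (0:ℝ) ≤ |x| ^ (p-2) := Real.rpow_nonneg (abs_nonneg x) _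
    rw [Real.norm_eq_abs, abs_mul, abs_of_nonneg (by linarith : (0:ℝ) ≤ p - 1),
      abs_of_nonneg h0]
    calc (p-1) * |x| ^ (p-2) ≤ 1 * (ρ ^ (p-2)) := by
          apply mul_le_mul (by linarith) hx2 h0 zero_le_one
      _ = ρ ^ (p-2) := one_mul _


set_option maxHeartbeats 1000000 in
/-- local uniqueness for the first-order system when `m > 2`,
`f` is locally Lipschitz near `u₀` and `f(u₀) ≠ 0`, starting from `v = 0`. -/
theorem system_local_uniqueness
    (N m : ℝ) (hm : 2 < m) (hNm : m ≤ N)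
    (r₀ η : ℝ) (hr₀ : 0 < r₀) (hη : 0 < η)
    (f : ℝ → ℝ) (u₀ : ℝ)
    (hlip : ∃ ε : ℝ, 0 < ε ∧ ∃ K : NNReal, LipschitzOnWith K f (Metric.ball u₀ ε))
    (hfu₀ : f u₀ ≠ 0)
    (u₁ v₁ u₂ v₂ : ℝ → ℝ)
    (h₁ : ∀ r ∈ Set.Icc r₀ (r₀ + η),
      HasDerivWithinAt u₁ (|v₁ r| ^ (m / (m - 1) - 2) * v₁ r) (Set.Icc r₀ (r₀ + η)) r ∧
      HasDerivWithinAt v₁ (-((N - 1) / r) * v₁ r - f (u₁ r)) (Set.Icc r₀ (r₀ + η)) r)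
    (h₂ : ∀ r ∈ Set.Icc r₀ (r₀ + η),
      HasDerivWithinAt u₂ (|v₂ r| ^ (m / (m - 1) - 2) * v₂ r) (Set.Icc r₀ (r₀ + η)) r ∧
      HasDerivWithinAt v₂ (-((N - 1) / r) * v₂ r - f (u₂ r)) (Set.Icc r₀ (r₀ + η)) r)
    (hu₁0 : u₁ r₀ = u₀) (hu₂0 : u₂ r₀ = u₀)
    (hv₁0 : v₁ r₀ = 0) (hv₂0 : v₂ r₀ = 0) :
    ∃ δ : ℝ, 0 < δ ∧ δ ≤ η ∧
      ∀ r ∈ Set.Icc r₀ (r₀ + δ), u₁ r = u₂ r ∧ v₁ r = v₂ r := by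
  obtain ⟨ε, hε, K, hK⟩ := hlip
  obtain ⟨p, hpdef⟩ : ∃ p : ℝ, p = m / (m - 1) := ⟨_, rfl⟩
  rw [(by rw [hpdef] : m / (m - 1) - 2 = p - 2)] at h₁ h₂
  have hm1 : (1:ℝ) < m - 1 := by linarith
  have hp1 : 1 < p := by rw [hpdef]; exact (one_lt_div (by linarith)).2 (by linarith)
  have hp2 : p < 2 := by rw [hpdef, div_lt_iff₀ (by linarith)]; linarith
  have hpne : p ≠ 0 := by linarith
  have hp1' : (0:ℝ) < p - 1 := by linarith
  obtain ⟨f₀, hf₀def⟩ : ∃ y : ℝ, y = f u₀ := ⟨_, rfl⟩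
  obtain ⟨c, hcdef⟩ : ∃ c : ℝ, c = |f₀| / 2 := ⟨_, rfl⟩
  have hc : 0 < c := by
    have : 0 < |f₀| := abs_pos.2 (by rw [hf₀def]; exact hfu₀)
    rw [hcdef]; linarith
  obtain ⟨D, hDdef⟩ : ∃ D : ℝ, D = (N - 1) / r₀ := ⟨_, rfl⟩
  have hD : 0 < D := by rw [hDdef]; exact div_pos (by linarith) hr₀
  obtain ⟨C₂, hC₂def⟩ : ∃ x : ℝ, x = D + (K : ℝ) := ⟨_, rfl⟩
  have hC₂ : 0 < C₂ := by rw [hC₂def]; exact add_pos_of_pos_of_nonneg hD K.coe_nonneg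
  obtain ⟨C₁, hC₁def⟩ : ∃ x : ℝ, x = c ^ (p - 2) * C₂ / p := ⟨_, rfl⟩
  have hC₁ : 0 < C₁ := by rw [hC₁def]; positivity
  -- the set of "good" radii
  have hr₀mem : r₀ ∈ Set.Icc r₀ (r₀ + η) := ⟨le_refl _, by linarith⟩
  -- eventual conditions near r₀
  have hev : ∀ᶠ r in nhdsWithin r₀ (Set.Icc r₀ (r₀ + η)),
      (dist (u₁ r) u₀ < ε ∧ dist (u₂ r) u₀ < ε ∧
       |(-((N - 1) / r) * v₁ r - f (u₁ r)) + f₀| ≤ c ∧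
       |(-((N - 1) / r) * v₂ r - f (u₂ r)) + f₀| ≤ c) := by
    have hu₁t : Filter.Tendsto u₁ (nhdsWithin r₀ (Set.Icc r₀ (r₀ + η))) (nhds u₀) := by
      have := ((h₁ r₀ hr₀mem).1).continuousWithinAt
      rwa [ContinuousWithinAt, hu₁0] at this
    have hu₂t : Filter.Tendsto u₂ (nhdsWithin r₀ (Set.Icc r₀ (r₀ + η))) (nhds u₀) := by
      have := ((h₂ r₀ hr₀mem).1).continuousWithinAt
      rwa [ContinuousWithinAt, hu₂0] at this
    have hv₁t : Filter.Tendsto v₁ (nhdsWithin r₀ (Set.Icc r₀ (r₀ + η))) (nhds 0) := by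
      have := ((h₁ r₀ hr₀mem).2).continuousWithinAt
      rwa [ContinuousWithinAt, hv₁0] at this
    have hv₂t : Filter.Tendsto v₂ (nhdsWithin r₀ (Set.Icc r₀ (r₀ + η))) (nhds 0) := by
      have := ((h₂ r₀ hr₀mem).2).continuousWithinAt
      rwa [ContinuousWithinAt, hv₂0] at this
    have hfc : ContinuousAt f u₀ :=
      hK.continuousOn.continuousAt (Metric.isOpen_ball.mem_nhds (Metric.mem_ball_self hε))
    have hcoef : Filter.Tendsto (fun r : ℝ => -((N - 1) / r))
        (nhdsWithin r₀ (Set.Icc r₀ (r₀ + η))) (nhds (-((N - 1) / r₀))) :=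
      (((continuousAt_const.div continuousAt_id hr₀.ne').neg).continuousWithinAt :)
    have hg₁ : Filter.Tendsto (fun r => -((N - 1) / r) * v₁ r - f (u₁ r))
        (nhdsWithin r₀ (Set.Icc r₀ (r₀ + η))) (nhds (-f₀)) := by
      rw [hf₀def]
      have := (hcoef.mul hv₁t).sub (hfc.tendsto.comp hu₁t)
      simp only [mul_zero, zero_sub, Function.comp] at this
      exact this
    have hg₂ : Filter.Tendsto (fun r => -((N - 1) / r) * v₂ r - f (u₂ r))
        (nhdsWithin r₀ (Set.Icc r₀ (r₀ + η))) (nhds (-f₀)) := by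
      rw [hf₀def]
      have := (hcoef.mul hv₂t).sub (hfc.tendsto.comp hu₂t)
      simp only [mul_zero, zero_sub, Function.comp] at this
      exact this
    have e1 := hu₁t (Metric.ball_mem_nhds u₀ hε)
    have e2 := hu₂t (Metric.ball_mem_nhds u₀ hε)
    have e3 := hg₁ (Metric.closedBall_mem_nhds (-f₀) hc)
    have e4 := hg₂ (Metric.closedBall_mem_nhds (-f₀) hc)
    filter_upwards [e1, e2, e3, e4] with r he1 he2 he3 he4
    refine ⟨he1, he2, ?_, ?_⟩
    · have := he3
      simp only [Set.mem_preimage, Set.mem_setOf_eq, Metric.mem_closedBall,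
        Real.dist_eq, sub_neg_eq_add] at this
      exact this
    · have := he4
      simp only [Set.mem_preimage, Set.mem_setOf_eq, Metric.mem_closedBall,
        Real.dist_eq, sub_neg_eq_add] at this
      exact this
  obtain ⟨δ', hδ', hPδ'⟩ : ∃ δ' > 0, ∀ r ∈ Set.Icc r₀ (r₀ + η), dist r r₀ < δ' →
      (dist (u₁ r) u₀ < ε ∧ dist (u₂ r) u₀ < ε ∧
       |(-((N - 1) / r) * v₁ r - f (u₁ r)) + f₀| ≤ c ∧
       |(-((N - 1) / r) * v₂ r - f (u₂ r)) + f₀| ≤ c) := by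
    obtain ⟨δ', hδ'pos, hsub⟩ := Metric.mem_nhdsWithin_iff.1 hev
    exact ⟨δ', hδ'pos, fun r hr hd => hsub ⟨Metric.mem_ball.2 hd, hr⟩⟩
  obtain ⟨δ, hδdef⟩ : ∃ x : ℝ, x = min (min (δ'/2) η) (min 1 (1 / (2*(C₁+C₂)+1))) := ⟨_, rfl⟩
  have hδpos : 0 < δ := by
    rw [hδdef]
    exact lt_min (lt_min (by linarith) hη) (lt_min one_pos (by positivity))
  have hδη : δ ≤ η := by rw [hδdef]; exact le_trans (min_le_left _ _) (min_le_right _ _)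
  have hδ1 : δ ≤ 1 := by rw [hδdef]; exact le_trans (min_le_right _ _) (min_le_left _ _)
  have hδS : δ ≤ 1 / (2*(C₁+C₂)+1) := by
    rw [hδdef]; exact le_trans (min_le_right _ _) (min_le_right _ _)
  have hδ'2 : δ ≤ δ'/2 := by rw [hδdef]; exact le_trans (min_le_left _ _) (min_le_left _ _)
  have hIJ : Set.Icc r₀ (r₀ + δ) ⊆ Set.Icc r₀ (r₀ + η) :=
    Set.Icc_subset_Icc le_rfl (by linarith)
  have hP : ∀ r ∈ Set.Icc r₀ (r₀ + δ),
      (dist (u₁ r) u₀ < ε ∧ dist (u₂ r) u₀ < ε ∧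
       |(-((N - 1) / r) * v₁ r - f (u₁ r)) + f₀| ≤ c ∧
       |(-((N - 1) / r) * v₂ r - f (u₂ r)) + f₀| ≤ c) := by
    intro r hr
    refine hPδ' r (hIJ hr) ?_
    rw [Real.dist_eq, abs_of_nonneg (by linarith [hr.1])]
    have := hr.2; linarith
  have hsmall : C₁ * δ ^ p + C₂ * δ ≤ 1/2 := by
    have h1 : δ ^ p ≤ δ := by
      calc δ ^ p ≤ δ ^ (1:ℝ) := Real.rpow_le_rpow_of_exponent_ge hδpos hδ1 hp1.le
        _ = δ := Real.rpow_one δ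
    have h2 : (C₁ + C₂) * δ ≤ (C₁ + C₂) * (1 / (2*(C₁+C₂)+1)) :=
      mul_le_mul_of_nonneg_left hδS (by positivity)
    have h3 : (C₁ + C₂) * (1 / (2*(C₁+C₂)+1)) ≤ 1/2 := by
      rw [mul_one_div, div_le_div_iff₀ (by positivity) (by norm_num)]
      nlinarith
    nlinarith [mul_le_mul_of_nonneg_left h1 hC₁.le]
  -- max point of the discrepancy
  have hcont : ContinuousOn (fun r => |u₁ r - u₂ r| + |v₁ r - v₂ r|) (Set.Icc r₀ (r₀ + δ)) := by
    have c1 : ContinuousOn u₁ (Set.Icc r₀ (r₀ + δ)) :=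
      fun r hr => (((h₁ r (hIJ hr)).1).mono hIJ).continuousWithinAt
    have c2 : ContinuousOn u₂ (Set.Icc r₀ (r₀ + δ)) :=
      fun r hr => (((h₂ r (hIJ hr)).1).mono hIJ).continuousWithinAt
    have c3 : ContinuousOn v₁ (Set.Icc r₀ (r₀ + δ)) :=
      fun r hr => (((h₁ r (hIJ hr)).2).mono hIJ).continuousWithinAt
    have c4 : ContinuousOn v₂ (Set.Icc r₀ (r₀ + δ)) :=
      fun r hr => (((h₂ r (hIJ hr)).2).mono hIJ).continuousWithinAt
    exact ((c1.sub c2).abs).add ((c3.sub c4).abs)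
  obtain ⟨rs, hrsI, hmax'⟩ := isCompact_Icc.exists_isMaxOn
    ⟨r₀, ⟨le_refl _, by linarith⟩⟩ hcont
  obtain ⟨M, hMdef⟩ : ∃ x : ℝ, x = |u₁ rs - u₂ rs| + |v₁ rs - v₂ rs| := ⟨_, rfl⟩
  have hmax : ∀ r ∈ Set.Icc r₀ (r₀ + δ), |u₁ r - u₂ r| + |v₁ r - v₂ r| ≤ M := by
    intro r hr; rw [hMdef]; exact hmax' hr
  have hM0 : 0 ≤ M := by rw [hMdef]; positivity
  -- derivative facts within the small interval
  have hw' : ∀ r ∈ Set.Icc r₀ (r₀ + δ), HasDerivWithinAt (fun t => u₁ t - u₂ t)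
      ((|v₁ r| ^ (p-2) * v₁ r) - (|v₂ r| ^ (p-2) * v₂ r)) (Set.Icc r₀ (r₀ + δ)) r := by
    intro r hr
    exact (((h₁ r (hIJ hr)).1).mono hIJ).sub (((h₂ r (hIJ hr)).1).mono hIJ)
  have hz' : ∀ r ∈ Set.Icc r₀ (r₀ + δ), HasDerivWithinAt (fun t => v₁ t - v₂ t)
      ((-((N - 1) / r) * v₁ r - f (u₁ r)) - (-((N - 1) / r) * v₂ r - f (u₂ r)))
      (Set.Icc r₀ (r₀ + δ)) r := by
    intro r hr
    exact (((h₁ r (hIJ hr)).2).mono hIJ).sub (((h₂ r (hIJ hr)).2).mono hIJ)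
  -- step 1: bound on |v₁ - v₂|
  have hB : ∀ r ∈ Set.Icc r₀ (r₀ + δ), |v₁ r - v₂ r| ≤ C₂ * M * (r - r₀) := by
    have bound : ∀ s ∈ Set.Icc r₀ (r₀ + δ),
        ‖(-((N - 1) / s) * v₁ s - f (u₁ s)) - (-((N - 1) / s) * v₂ s - f (u₂ s))‖ ≤ C₂ * M := by
      intro s hs
      obtain ⟨hP1, hP2, -, -⟩ := hP s hs
      have hfrac : (N - 1) / s ≤ D := by
        rw [hDdef]; exact div_le_div_of_nonneg_left (by linarith) hr₀ hs.1
      have hfrac0 : 0 ≤ (N - 1) / s := div_nonneg (by linarith) (by linarith [hs.1])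
      have hflip : |f (u₁ s) - f (u₂ s)| ≤ (K : ℝ) * |u₁ s - u₂ s| := by
        have := hK.dist_le_mul (u₁ s) (Metric.mem_ball.2 hP1) (u₂ s) (Metric.mem_ball.2 hP2)
        rwa [Real.dist_eq, Real.dist_eq] at this
      have hvM : |v₁ s - v₂ s| ≤ M :=
        le_trans (le_add_of_nonneg_left (abs_nonneg _)) (hmax s hs)
      have huM : |u₁ s - u₂ s| ≤ M :=
        le_trans (le_add_of_nonneg_right (abs_nonneg _)) (hmax s hs)
      rw [Real.norm_eq_abs, show (-((N - 1) / s) * v₁ s - f (u₁ s)) -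
          (-((N - 1) / s) * v₂ s - f (u₂ s))
          = -((N - 1) / s) * (v₁ s - v₂ s) - (f (u₁ s) - f (u₂ s)) by ring]
      calc |(-((N - 1) / s)) * (v₁ s - v₂ s) - (f (u₁ s) - f (u₂ s))|
          ≤ |(-((N - 1) / s)) * (v₁ s - v₂ s)| + |f (u₁ s) - f (u₂ s)| := abs_sub _ _
        _ ≤ D * M + (K : ℝ) * M := by
            have h1 : |(-((N - 1) / s)) * (v₁ s - v₂ s)| ≤ D * M := by
              rw [abs_mul, abs_neg, abs_of_nonneg hfrac0]
              exact mul_le_mul hfrac hvM (abs_nonneg _) hD.le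
            have h2 : |f (u₁ s) - f (u₂ s)| ≤ (K : ℝ) * M :=
              le_trans hflip (mul_le_mul_of_nonneg_left huM K.coe_nonneg)
            linarith
        _ = C₂ * M := by rw [hC₂def]; ring
    intro r hr
    have key := (convex_Icc r₀ (r₀ + δ)).norm_image_sub_le_of_norm_hasDerivWithin_le
      hz' bound ⟨le_refl _, by linarith⟩ hr
    simpa [Real.norm_eq_abs, hv₁0, hv₂0, abs_of_nonneg (sub_nonneg.2 hr.1)] using key
  -- step 1': each vᵢ stays close to -f₀ (r - r₀)
  have hv1close : ∀ r ∈ Set.Icc r₀ (r₀ + δ), |v₁ r + f₀ * (r - r₀)| ≤ c * (r - r₀) := by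
    have hder : ∀ s ∈ Set.Icc r₀ (r₀ + δ), HasDerivWithinAt (fun t => v₁ t + f₀ * (t - r₀))
        ((-((N - 1) / s) * v₁ s - f (u₁ s)) + f₀) (Set.Icc r₀ (r₀ + δ)) s := by
      intro s hs
      have hd1 := ((h₁ s (hIJ hs)).2).mono hIJ
      have hd2 : HasDerivWithinAt (fun t : ℝ => f₀ * (t - r₀)) f₀ (Set.Icc r₀ (r₀ + δ)) s := by
        have := ((((hasDerivAt_id s).sub_const r₀)).const_mul f₀).hasDerivWithinAt
          (s := Set.Icc r₀ (r₀ + δ))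
        simpa using this
      exact hd1.add hd2
    have bound : ∀ s ∈ Set.Icc r₀ (r₀ + δ),
        ‖(-((N - 1) / s) * v₁ s - f (u₁ s)) + f₀‖ ≤ c := by
      intro s hs
      rw [Real.norm_eq_abs]
      exact (hP s hs).2.2.1
    intro r hr
    have key := (convex_Icc r₀ (r₀ + δ)).norm_image_sub_le_of_norm_hasDerivWithin_le
      hder bound ⟨le_refl _, by linarith⟩ hr
    simpa [Real.norm_eq_abs, hv₁0, abs_of_nonneg (sub_nonneg.2 hr.1)] using key
  have hv2close : ∀ r ∈ Set.Icc r₀ (r₀ + δ), |v₂ r + f₀ * (r - r₀)| ≤ c * (r - r₀) := by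
    have hder : ∀ s ∈ Set.Icc r₀ (r₀ + δ), HasDerivWithinAt (fun t => v₂ t + f₀ * (t - r₀))
        ((-((N - 1) / s) * v₂ s - f (u₂ s)) + f₀) (Set.Icc r₀ (r₀ + δ)) s := by
      intro s hs
      have hd1 := ((h₂ s (hIJ hs)).2).mono hIJ
      have hd2 : HasDerivWithinAt (fun t : ℝ => f₀ * (t - r₀)) f₀ (Set.Icc r₀ (r₀ + δ)) s := by
        have := ((((hasDerivAt_id s).sub_const r₀)).const_mul f₀).hasDerivWithinAt
          (s := Set.Icc r₀ (r₀ + δ))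
        simpa using this
      exact hd1.add hd2
    have bound : ∀ s ∈ Set.Icc r₀ (r₀ + δ),
        ‖(-((N - 1) / s) * v₂ s - f (u₂ s)) + f₀‖ ≤ c := by
      intro s hs
      rw [Real.norm_eq_abs]
      exact (hP s hs).2.2.2
    intro r hr
    have key := (convex_Icc r₀ (r₀ + δ)).norm_image_sub_le_of_norm_hasDerivWithin_le
      hder bound ⟨le_refl _, by linarith⟩ hr
    simpa [Real.norm_eq_abs, hv₂0, abs_of_nonneg (sub_nonneg.2 hr.1)] using key
  -- step 2: bound on |u₁ - u₂|
  have hA : ∀ r ∈ Set.Icc r₀ (r₀ + δ), |u₁ r - u₂ r| ≤ (C₁ * M) * (r - r₀) ^ p := by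
    have hwcont : ContinuousOn (fun t => u₁ t - u₂ t) (Set.Icc r₀ (r₀ + δ)) :=
      fun r hr => (hw' r hr).continuousWithinAt
    have hf' : ∀ x ∈ Set.Ico r₀ (r₀ + δ), HasDerivWithinAt (fun t => u₁ t - u₂ t)
        ((|v₁ x| ^ (p - 2) * v₁ x) - (|v₂ x| ^ (p - 2) * v₂ x)) (Set.Ici x) x := by
      intro x hx
      exact (hw' x (Set.Ico_subset_Icc_self hx)).mono_of_mem_nhdsWithin (Icc_mem_nhdsGE_of_mem hx)
    have hBd : ∀ x : ℝ, HasDerivAt (fun t => (C₁ * M) * (t - r₀) ^ p)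
        ((C₁ * M * p) * (x - r₀) ^ (p - 1)) x := by
      intro x
      have h1 : HasDerivAt (fun t : ℝ => t - r₀) 1 x := (hasDerivAt_id x).sub_const r₀
      have h2 : HasDerivAt (fun y : ℝ => y ^ p) (p * (x - r₀) ^ (p - 1)) (x - r₀) :=
        Real.hasDerivAt_rpow_const (Or.inr hp1.le)
      have h3 := (h2.comp x h1).const_mul (C₁ * M)
      refine h3.congr_deriv ?_
      ring
    have bound : ∀ x ∈ Set.Ico r₀ (r₀ + δ),
        ‖(|v₁ x| ^ (p - 2) * v₁ x) - (|v₂ x| ^ (p - 2) * v₂ x)‖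
          ≤ (C₁ * M * p) * (x - r₀) ^ (p - 1) := by
      intro x hx
      rcases eq_or_lt_of_le hx.1 with heq | hlt
      · rw [← heq, hv₁0, hv₂0]
        simp only [mul_zero, sub_self, norm_zero]
        rw [Real.zero_rpow (ne_of_gt hp1')]
        simp
      · have ht : 0 < x - r₀ := by linarith
        have hxI : x ∈ Set.Icc r₀ (r₀ + δ) := Set.Ico_subset_Icc_self hx
        have hv1c := hv1close x hxI
        have hv2c := hv2close x hxI
        have hseg : ∀ y ∈ Set.uIcc (v₁ x) (v₂ x), c * (x - r₀) ≤ |y| := by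
          intro y hy
          have h1 := abs_le.1 hv1c
          have h2 := abs_le.1 hv2c
          have hy' : |y + f₀ * (x - r₀)| ≤ c * (x - r₀) := by
            rcases Set.mem_uIcc.1 hy with ⟨ha, hb⟩ | ⟨ha, hb⟩ <;>
              (rw [abs_le]; constructor <;> linarith [h1.1, h1.2, h2.1, h2.2])
          have habs : |f₀ * (x - r₀)| = 2 * (c * (x - r₀)) := by
            rw [abs_mul, abs_of_pos ht, hcdef]; ring
          have htri : |f₀ * (x - r₀)| ≤ |y + f₀ * (x - r₀)| + |y| := by
            calc |f₀ * (x - r₀)| = |(y + f₀ * (x - r₀)) + (-y)| := by ring_nf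
              _ ≤ |y + f₀ * (x - r₀)| + |-y| := abs_add_le _ _
              _ = |y + f₀ * (x - r₀)| + |y| := by rw [abs_neg]
          linarith [habs ▸ htri]
        have hphi := phi_lip hp1 hp2 (mul_pos hc ht) hseg
        have hBx := hB x hxI
        rw [Real.norm_eq_abs]
        calc |(|v₁ x| ^ (p - 2) * v₁ x) - (|v₂ x| ^ (p - 2) * v₂ x)|
            ≤ (c * (x - r₀)) ^ (p - 2) * |v₁ x - v₂ x| := hphi
          _ ≤ (c * (x - r₀)) ^ (p - 2) * (C₂ * M * (x - r₀)) :=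
              mul_le_mul_of_nonneg_left hBx (Real.rpow_nonneg (by positivity) _)
          _ = (C₁ * M * p) * (x - r₀) ^ (p - 1) := by
              rw [Real.mul_rpow hc.le ht.le, show p - 1 = (p - 2) + 1 by ring,
                Real.rpow_add_one ht.ne', hC₁def]
              field_simp
    intro r hr
    have ha0 : ‖u₁ r₀ - u₂ r₀‖ ≤ (C₁ * M) * (r₀ - r₀) ^ p := by
      rw [hu₁0, hu₂0, sub_self, sub_self, Real.zero_rpow hpne]
      simp
    exact image_norm_le_of_norm_deriv_right_le_deriv_boundary hwcont hf' ha0 hBd bound hr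
  -- conclude M = 0
  have hMle : M ≤ (C₁ * δ ^ p + C₂ * δ) * M := by
    have hA' := hA rs hrsI
    have hB' := hB rs hrsI
    have h1 : (rs - r₀) ^ p ≤ δ ^ p :=
      Real.rpow_le_rpow (sub_nonneg.2 hrsI.1) (by linarith [hrsI.2]) (by linarith)
    have h2 : rs - r₀ ≤ δ := by linarith [hrsI.2]
    have e1 : (C₁ * M) * (rs - r₀) ^ p ≤ (C₁ * M) * δ ^ p :=
      mul_le_mul_of_nonneg_left h1 (by positivity)
    have e2 : C₂ * M * (rs - r₀) ≤ C₂ * M * δ :=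
      mul_le_mul_of_nonneg_left h2 (by positivity)
    calc M = |u₁ rs - u₂ rs| + |v₁ rs - v₂ rs| := hMdef
      _ ≤ (C₁ * M) * δ ^ p + C₂ * M * δ := by linarith
      _ = (C₁ * δ ^ p + C₂ * δ) * M := by ring
  have hMzero : M = 0 := by
    have h2 : (C₁ * δ ^ p + C₂ * δ) * M ≤ 1/2 * M :=
      mul_le_mul_of_nonneg_right hsmall hM0
    have h3 : M ≤ 1/2 * M := le_trans hMle h2
    linarith
  refine ⟨δ, hδpos, hδη, fun r hr => ?_⟩
  have h1 := hmax r hr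
  rw [hMzero] at h1
  have h2 : |u₁ r - u₂ r| = 0 ∧ |v₁ r - v₂ r| = 0 := by
    have g1 := abs_nonneg (u₁ r - u₂ r)
    have g2 := abs_nonneg (v₁ r - v₂ r)
    constructor <;> linarith
  exact ⟨sub_eq_zero.1 (abs_eq_zero.1 h2.1), sub_eq_zero.1 (abs_eq_zero.1 h2.2)⟩
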